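/- Fix two compositions of n with associated Young subgroups W_{Q'}, W_Q ≤ S_n and block partitions {B'_a} and {B_b} of {1,…,n}. Let w ∈ S_n be the minimal-length representative of the double coset W_{Q'} w W_Q, and assume w ≠ 1. Then there exist indices i < j with i and j lying in different Q-blocks, such that w(i) > w(j) and w(i), w(j) lie in different Q'-blocks. -/

import Mathlib

/-- The length of a permutation of `Fin n`: the number of inversions. -/
def invLength {n : ℕ} (w : Equiv.Perm (Fin n)) : ℕ :=
  (Finset.univ.filter (fun p : Fin n × Fin n => p.1 < p.2 ∧ w p.2 < w p.1)).card

lemma invLength_inv {n : ℕ} (w : Equiv.Perm (Fin n)) : invLength w⁻¹ = invLength w := by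
  unfold invLength
  apply Finset.card_bij' (fun p _ => ((w⁻¹ : Equiv.Perm (Fin n)) p.2, (w⁻¹ : Equiv.Perm (Fin n)) p.1))
    (fun p _ => (w p.2, w p.1))
  · intro p hp
    simp only [Finset.mem_filter, Finset.mem_univ, true_and] at hp ⊢
    exact ⟨hp.2, by simpa using hp.1⟩
  · intro p hp
    simp only [Finset.mem_filter, Finset.mem_univ, true_and] at hp ⊢
    exact ⟨hp.2, by simpa using hp.1⟩
  · intro p hp; simp
  · intro p hp; simp

/-- Right multiplication by an adjacent transposition at a descent strictly decreases
the inversion count. -/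
lemma invLength_mul_swap_lt {n : ℕ} (w : Equiv.Perm (Fin n)) (k k' : Fin n)
    (hkk' : (k' : ℕ) = (k : ℕ) + 1) (hd : w k' < w k) :
    invLength (w * Equiv.swap k k') < invLength w := by
  have hk : k < k' := by rw [Fin.lt_def]; omega
  have hne : k ≠ k' := ne_of_lt hk
  set s := Equiv.swap k k' with hs
  -- key order fact
  have key : ∀ x y : Fin n, x < y → ¬(x = k ∧ y = k') → s x < s y := by
    intro x y hxy hnot
    have hxyv : (x : ℕ) < (y : ℕ) := hxy
    rcases eq_or_ne x k with hx | hx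
    · have hy' : y ≠ k' := fun h => hnot ⟨hx, h⟩
      have hxv : (x : ℕ) = (k : ℕ) := congrArg Fin.val hx
      have hyk : y ≠ k := fun h => by
        have := congrArg Fin.val h; omega
      have hy'v : (y : ℕ) ≠ (k' : ℕ) := fun h => hy' (Fin.ext h)
      rw [hs, hx, Equiv.swap_apply_left, Equiv.swap_apply_of_ne_of_ne hyk hy']
      rw [Fin.lt_def]; omega
    · have hxv : (x : ℕ) ≠ (k : ℕ) := fun h => hx (Fin.ext h)
      rcases eq_or_ne x k' with hx' | hx'
      · have hx'v : (x : ℕ) = (k' : ℕ) := congrArg Fin.val hx'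
        have hyk : y ≠ k := fun h => by
          have := congrArg Fin.val h; omega
        have hyk' : y ≠ k' := fun h => by
          have := congrArg Fin.val h; omega
        rw [hs, hx', Equiv.swap_apply_right, Equiv.swap_apply_of_ne_of_ne hyk hyk']
        rw [Fin.lt_def]; omega
      · have hx'v : (x : ℕ) ≠ (k' : ℕ) := fun h => hx' (Fin.ext h)
        rcases eq_or_ne y k with hy | hy
        · have hyv : (y : ℕ) = (k : ℕ) := congrArg Fin.val hy
          rw [hs, hy, Equiv.swap_apply_left, Equiv.swap_apply_of_ne_of_ne hx hx']
          rw [Fin.lt_def]; omega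
        · rcases eq_or_ne y k' with hy' | hy'
          · have hy'v : (y : ℕ) = (k' : ℕ) := congrArg Fin.val hy'
            rw [hs, hy', Equiv.swap_apply_right, Equiv.swap_apply_of_ne_of_ne hx hx']
            rw [Fin.lt_def]; omega
          · rw [hs, Equiv.swap_apply_of_ne_of_ne hx hx', Equiv.swap_apply_of_ne_of_ne hy hy']
            exact hxy
  have hmem : (k, k') ∈ Finset.univ.filter
      (fun p : Fin n × Fin n => p.1 < p.2 ∧ w p.2 < w p.1) := by
    simp [hk, hd]
  have hle : invLength (w * s) ≤ ((Finset.univ.filter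
      (fun p : Fin n × Fin n => p.1 < p.2 ∧ w p.2 < w p.1)).erase (k, k')).card := by
    unfold invLength
    apply Finset.card_le_card_of_injOn (fun p => (s p.1, s p.2))
    · intro p hp
      rw [Finset.mem_coe, Finset.mem_filter] at hp
      simp only [Finset.mem_filter, Finset.mem_univ, true_and, Equiv.Perm.mul_apply] at hp
      have hpne : ¬(p.1 = k ∧ p.2 = k') := by
        rintro ⟨h1, h2⟩
        rw [h1, h2] at hp
        rw [hs, Equiv.swap_apply_left, Equiv.swap_apply_right] at hp
        exact absurd hp.2 (not_lt_of_gt hd)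
      have hlt := key p.1 p.2 hp.1 hpne
      rw [Finset.mem_coe, Finset.mem_erase]
      constructor
      · intro h
        have h1 : s p.1 = k := congrArg Prod.fst h
        have h2 : s p.2 = k' := congrArg Prod.snd h
        have : p.1 = k' := by rw [← Equiv.swap_apply_left k k', ← hs, ← h1]; simp [hs]
        have h2' : p.2 = k := by rw [← Equiv.swap_apply_right k k', ← hs, ← h2]; simp [hs]
        rw [this, h2'] at hp
        exact absurd (lt_trans hk hp.1) (lt_irrefl k)
      · simp only [Finset.mem_filter, Finset.mem_univ, true_and]
        exact ⟨hlt, hp.2⟩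
    · intro p _ q _ h
      have h1 : s p.1 = s q.1 := congrArg Prod.fst h
      have h2 : s p.2 = s q.2 := congrArg Prod.snd h
      exact Prod.ext (s.injective h1) (s.injective h2)
  exact lt_of_le_of_lt hle (Finset.card_erase_lt_of_mem hmem)

/-- If a function descends over an interval, it has an adjacent descent inside it. -/
lemma exists_adjacent_descent {α : Type*} [LinearOrder α] (g : ℕ → α) (a c : ℕ)
    (hac : a < c) (h : g c < g a) : ∃ k, a ≤ k ∧ k < c ∧ g (k + 1) < g k := by
  by_contra hc
  push_neg at hc
  have mono : ∀ m, a ≤ m → m ≤ c → g a ≤ g m := by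
    intro m ham
    induction m, ham using Nat.le_induction with
    | base => intro _; exact le_refl _
    | succ m hm ih =>
      intro hmc
      exact le_trans (ih (by omega)) (hc m hm (by omega))
  exact absurd (mono c (le_of_lt hac) (le_refl c)) (not_le_of_gt h)

/-- (Abe–Henniart–Vignéras, Lemma 5.13.) Let `b` and `b'` be the (monotone) block maps of two
compositions of `n`, with Young subgroups `W_Q = {τ : b ∘ τ = b}` and `W_{Q'} = {σ : b' ∘ σ = b'}`.
If `w ≠ 1` is the minimal-length representative of the double coset `W_{Q'}·w·W_Q`, then there
exist `i < j` in different `Q`-blocks with `w i > w j` and `w i`, `w j` in different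
`Q'`-blocks; i.e. `w` sends some root of `Σ_N` into `−Σ_{N'}`. -/
theorem nontrivial_min_double_coset_rep_sends_root {n t t' : ℕ}
    (b : Fin n → Fin t) (b' : Fin n → Fin t')
    (hb : Monotone b) (hb' : Monotone b') (w : Equiv.Perm (Fin n)) (hw : w ≠ 1)
    (hmin : ∀ σ τ : Equiv.Perm (Fin n), (∀ i, b' (σ i) = b' i) → (∀ i, b (τ i) = b i) →
      invLength w ≤ invLength (σ * w * τ)) :
    ∃ i j : Fin n, i < j ∧ b i ≠ b j ∧ w j < w i ∧ b' (w i) ≠ b' (w j) := by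
  -- There is an inversion since w ≠ 1.
  have hex : ∃ i j : Fin n, i < j ∧ w j < w i := by
    by_contra hc
    push_neg at hc
    apply hw
    have hsm : StrictMono (w : Fin n → Fin n) := by
      intro i j hij
      exact lt_of_le_of_ne (hc i j hij) (fun h => (ne_of_lt hij) (w.injective h))
    have hrange : Set.range (w : Fin n → Fin n) = Set.range (id : Fin n → Fin n) := by
      rw [Set.range_id, Set.range_eq_univ]
      exact w.surjective
    have := (@StrictMono.range_inj (Fin n) (Fin n) _ _ (inferInstance : WellFoundedLT (Fin n)) _ _ hsm (strictMono_id (α := Fin n))).1 hrange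
    exact Equiv.ext fun x => congrFun this x
  obtain ⟨i, j, hij, hwij⟩ := hex
  have npos : 0 < n := Fin.pos i
  refine ⟨i, j, hij, ?_, hwij, ?_⟩
  · -- different Q-blocks
    intro hbe
    set g : ℕ → Fin n := fun m => w ⟨m % n, Nat.mod_lt m npos⟩ with hg
    have hgi : g (i : ℕ) = w i := by simp [hg, Nat.mod_eq_of_lt i.isLt]
    have hgj : g (j : ℕ) = w j := by simp [hg, Nat.mod_eq_of_lt j.isLt]
    obtain ⟨k, hik, hkj, hdesc⟩ := exists_adjacent_descent g i j hij (by rw [hgi, hgj]; exact hwij)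
    have hkn : k < n := lt_trans hkj j.isLt
    have hk1n : k + 1 < n := lt_of_le_of_lt hkj j.isLt
    set K : Fin n := ⟨k, hkn⟩ with hK
    set K' : Fin n := ⟨k + 1, hk1n⟩ with hK'
    have hdK : w K' < w K := by
      have h1 : g k = w K := by simp [hg, hK, Nat.mod_eq_of_lt hkn]
      have h2 : g (k + 1) = w K' := by simp [hg, hK', Nat.mod_eq_of_lt hk1n]
      rw [← h1, ← h2]; exact hdesc
    have hbK : b K = b K' := by
      have h1 : b i ≤ b K := hb (by rw [Fin.le_def]; exact hik)
      have h2 : b K ≤ b K' := hb (by rw [Fin.le_def]; exact Nat.le_succ k)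
      have h3 : b K' ≤ b j := hb (by rw [Fin.le_def]; exact hkj)
      rw [hbe] at h1
      exact le_antisymm h2 (le_trans h3 h1)
    have hτ : ∀ x, b (Equiv.swap K K' x) = b x := by
      intro x
      rcases eq_or_ne x K with h | h
      · rw [h, Equiv.swap_apply_left, ← hbK]
      · rcases eq_or_ne x K' with h' | h'
        · rw [h', Equiv.swap_apply_right, hbK]
        · rw [Equiv.swap_apply_of_ne_of_ne h h']
    have h1 := hmin 1 (Equiv.swap K K') (fun x => by simp) hτ
    rw [one_mul] at h1
    exact absurd h1 (not_le_of_gt (invLength_mul_swap_lt w K K' rfl hdK))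
  · -- different Q'-blocks
    intro hbe
    set g : ℕ → Fin n := fun m => w⁻¹ ⟨m % n, Nat.mod_lt m npos⟩ with hg
    have hgi : g ((w j : Fin n) : ℕ) = j := by
      simp [hg, Nat.mod_eq_of_lt (w j).isLt]
    have hgj : g ((w i : Fin n) : ℕ) = i := by
      simp [hg, Nat.mod_eq_of_lt (w i).isLt]
    obtain ⟨v, hvl, hvr, hdesc⟩ := exists_adjacent_descent g (w j) (w i) hwij
      (by rw [hgi, hgj]; exact hij)
    have hvn : v < n := lt_trans hvr (w i).isLt
    have hv1n : v + 1 < n := lt_of_le_of_lt hvr (w i).isLt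
    set V : Fin n := ⟨v, hvn⟩ with hV
    set V' : Fin n := ⟨v + 1, hv1n⟩ with hV'
    have hdV : w⁻¹ V' < w⁻¹ V := by
      have h1 : g v = w⁻¹ V := by simp [hg, hV, Nat.mod_eq_of_lt hvn]
      have h2 : g (v + 1) = w⁻¹ V' := by simp [hg, hV', Nat.mod_eq_of_lt hv1n]
      rw [← h1, ← h2]; exact hdesc
    have hbV : b' V = b' V' := by
      have h1 : b' (w j) ≤ b' V := hb' (by rw [Fin.le_def]; exact hvl)
      have h2 : b' V ≤ b' V' := hb' (by rw [Fin.le_def]; exact Nat.le_succ v)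
      have h3 : b' V' ≤ b' (w i) := hb' (by rw [Fin.le_def]; exact hvr)
      rw [hbe] at h3
      exact le_antisymm h2 (le_trans h3 h1)
    have hσ : ∀ x, b' (Equiv.swap V V' x) = b' x := by
      intro x
      rcases eq_or_ne x V with h | h
      · rw [h, Equiv.swap_apply_left, ← hbV]
      · rcases eq_or_ne x V' with h' | h'
        · rw [h', Equiv.swap_apply_right, hbV]
        · rw [Equiv.swap_apply_of_ne_of_ne h h']
    have h1 := hmin (Equiv.swap V V') 1 hσ (fun x => by simp)
    rw [mul_one] at h1
    have heq : invLength (Equiv.swap V V' * w) = invLength (w⁻¹ * Equiv.swap V V') := by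
      rw [← invLength_inv (Equiv.swap V V' * w), mul_inv_rev, Equiv.swap_inv]
    have hlt := invLength_mul_swap_lt w⁻¹ V V' rfl hdV
    rw [invLength_inv] at hlt
    rw [heq] at h1
    exact absurd h1 (not_le_of_gt hlt)
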